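/- Symmetry of the K-Shapley value: let V be a K-restricted cooperative game on [M] and let i, j ∈ [M] be symmetric players, i.e. V(S ∪ {i}) = V(S ∪ {j}) for every S ⊆ [M] \ {i, j} with |S| ≤ K − 1. Then φ_i^K(V) = φ_j^K(V). -/

import Mathlib

open Finset

/-- The `K`-Shapley value of player `i` in a `K`-restricted cooperative game `V` on `[M]`. -/
noncomputable def KShapley (M K : ℕ) (V : Finset (Fin M) → ℝ) (i : Fin M) : ℝ :=
  (1 / ((M - 1).choose (K - 1) : ℝ)) *
    ∑ SK ∈ Finset.filter (fun SK => i ∈ SK)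
        (Finset.powersetCard K (Finset.univ : Finset (Fin M))),
      ∑ S ∈ (SK.erase i).powerset,
        ((S.card.factorial * (K - S.card - 1).factorial : ℕ) : ℝ) / (K.factorial : ℝ) *
          (V (insert i S) - V S)

/-- Symmetry of the `K`-Shapley value: if `i` and `j` are symmetric players of a
`K`-restricted cooperative game `V` on `[M]`, then their `K`-Shapley values agree. -/
theorem kshapley_symmetry (M K : ℕ) (hM : 1 ≤ M) (hK1 : 1 ≤ K) (hKM : K ≤ M)
    (V : Finset (Fin M) → ℝ) (hV0 : V ∅ = 0) (i j : Fin M)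
    (hsym : ∀ S : Finset (Fin M), i ∉ S → j ∉ S → S.card ≤ K - 1 →
      V (insert i S) = V (insert j S)) :
    KShapley M K V i = KShapley M K V j := by
  classical
  by_cases hij : i = j
  · rw [hij]
  unfold KShapley
  congr 1
  set σ : Fin M ≃ Fin M := Equiv.swap i j with hσ
  have hσi : σ i = j := Equiv.swap_apply_left i j
  have hσj : σ j = i := Equiv.swap_apply_right i j
  have hσσ : ∀ x, σ (σ x) = x := fun x => Equiv.swap_apply_self i j x
  have hmapmap : ∀ T : Finset (Fin M), (T.map σ.toEmbedding).map σ.toEmbedding = T := by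
    intro T
    ext a
    simp only [Finset.mem_map_equiv, hσ, Equiv.symm_swap]
    rw [show Equiv.swap i j ((Equiv.swap i j) a) = a from hσσ a]
  refine Finset.sum_nbij' (fun SK => SK.map σ.toEmbedding)
      (fun SK => SK.map σ.toEmbedding) ?_ ?_ ?_ ?_ ?_
  · intro SK hSK
    simp only [Finset.mem_filter, Finset.mem_powersetCard] at hSK ⊢
    refine ⟨⟨Finset.subset_univ _, by simp [hSK.1.2]⟩, ?_⟩
    rw [Finset.mem_map]
    exact ⟨i, hSK.2, hσi⟩
  · intro SK hSK
    simp only [Finset.mem_filter, Finset.mem_powersetCard] at hSK ⊢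
    refine ⟨⟨Finset.subset_univ _, by simp [hSK.1.2]⟩, ?_⟩
    rw [Finset.mem_map]
    exact ⟨j, hSK.2, hσj⟩
  · intro SK _; exact hmapmap SK
  · intro SK _; exact hmapmap SK
  · intro SK hSK
    simp only [Finset.mem_filter, Finset.mem_powersetCard] at hSK
    obtain ⟨⟨-, hcard⟩, hiSK⟩ := hSK
    have herase : (SK.map σ.toEmbedding).erase j = (SK.erase i).map σ.toEmbedding := by
      rw [Finset.map_erase]
      simp [hσi]
    refine Finset.sum_nbij' (fun S => S.map σ.toEmbedding)
        (fun S => S.map σ.toEmbedding) ?_ ?_ ?_ ?_ ?_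
    · intro S hS
      rw [Finset.mem_powerset] at hS ⊢
      rw [herase]
      exact Finset.map_subset_map.2 hS
    · intro S hS
      rw [Finset.mem_powerset] at hS ⊢
      rw [herase] at hS
      have h2 : S.map σ.toEmbedding ⊆ ((SK.erase i).map σ.toEmbedding).map σ.toEmbedding :=
        Finset.map_subset_map.2 hS
      rwa [hmapmap] at h2
    · intro S _; exact hmapmap S
    · intro S _; exact hmapmap S
    intro S hS
    rw [Finset.mem_powerset] at hS
    have hiS : i ∉ S := fun h => Finset.notMem_erase i SK (hS h)
    have hScard : S.card ≤ K - 1 := by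
      have := Finset.card_le_card hS
      rwa [Finset.card_erase_of_mem hiSK, hcard] at this
    have hcardmap : (S.map σ.toEmbedding).card = S.card := Finset.card_map _
    by_cases hjS : j ∈ S
    · -- S.map σ = insert i (S.erase j)
      have hiej : i ∉ S.erase j := fun h => hiS (Finset.mem_of_mem_erase h)
      have hjej : j ∉ S.erase j := Finset.notMem_erase _ _
      have hejcard : (S.erase j).card ≤ K - 1 :=
        le_trans (Finset.card_le_card (Finset.erase_subset _ _)) hScard
      have hmapS : S.map σ.toEmbedding = insert i (S.erase j) := by
        ext a
        simp only [Finset.mem_map_equiv, hσ, Equiv.symm_swap, Finset.mem_insert,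
          Finset.mem_erase]
        constructor
        · intro ha
          by_cases hai : a = i
          · exact Or.inl hai
          · right
            constructor
            · intro haj
              rw [haj, hσj] at ha; exact hiS ha
            · rcases eq_or_ne a j with h | h
              · rw [h, hσj] at ha; exact absurd ha hiS
              · rwa [Equiv.swap_apply_of_ne_of_ne hai h] at ha
        · rintro (rfl | ⟨haj, haS⟩)
          · rw [hσi]; exact hjS
          · have hai : a ≠ i := fun h => hiS (h ▸ haS)
            rwa [Equiv.swap_apply_of_ne_of_ne hai haj]
      have hVS : V (S.map σ.toEmbedding) = V S := by
        rw [hmapS, hsym _ hiej hjej hejcard, Finset.insert_erase hjS]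
      have hVins : V (insert j (S.map σ.toEmbedding)) = V (insert i S) := by
        rw [hmapS, Finset.insert_comm, Finset.insert_erase hjS]
      rw [hcardmap, hVS, hVins]
    · -- σ fixes S
      have hmapS : S.map σ.toEmbedding = S := by
        ext a
        simp only [Finset.mem_map_equiv, hσ, Equiv.symm_swap]
        constructor
        · intro ha
          rcases eq_or_ne a i with rfl | hai
          · rw [hσi] at ha; exact absurd ha hjS
          rcases eq_or_ne a j with rfl | haj
          · rw [hσj] at ha; exact absurd ha hiS
          · rwa [Equiv.swap_apply_of_ne_of_ne hai haj] at ha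
        · intro ha
          have hai : a ≠ i := fun h => hiS (h ▸ ha)
          have haj : a ≠ j := fun h => hjS (h ▸ ha)
          rwa [Equiv.swap_apply_of_ne_of_ne hai haj]
      rw [hcardmap, hmapS, hsym S hiS hjS hScard]
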